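/- arXiv:2408.17144 — 2 statements merged into one kernel-verified Lean document; each statement's English description precedes it below -/
import Mathlib

section
/- Let 0 < α < 1 and let f, g ∈ C¹[0,T]. Then ∫₀ᵀ D^α f(t) g(t) dt = ∫₀ᵀ f(t) ∂_{t,T}^α g(t) dt + [g(t) I^{1−α} f(t)]_{t=0}^{t=T}, where D^α is the left Riemann–Liouville derivative, ∂_{t,T}^α the right Caputo derivative, and I^{1−α} the left Riemann–Liouville integral of order 1−α. -/
/-- Left Riemann–Liouville fractional integral of order `α` with base point `0`. -/
noncomputable def fracIntL (α : ℝ) (f : ℝ → ℝ) (t : ℝ) : ℝ :=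
  (Real.Gamma α)⁻¹ * ∫ τ in (0:ℝ)..t, (t - τ) ^ (α - 1) * f τ

/-- Left Riemann–Liouville fractional derivative of order `α` with base point `0`. -/
noncomputable def rlDerivL (α : ℝ) (f : ℝ → ℝ) (t : ℝ) : ℝ :=
  deriv (fun s => (Real.Gamma (1 - α))⁻¹ * ∫ τ in (0:ℝ)..s, (s - τ) ^ (-α) * f τ) t

/-- Right Caputo fractional derivative of order `α` with upper base point `T`. -/
noncomputable def caputoR (α T : ℝ) (g : ℝ → ℝ) (t : ℝ) : ℝ :=
  -(Real.Gamma (1 - α))⁻¹ * ∫ τ in t..T, deriv g τ * (τ - t) ^ (-α)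

namespace Stmt11Aux

open MeasureTheory Set Filter intervalIntegral

variable {α : ℝ}

/-- The substituted form of the fractional integral kernel convolution. -/
noncomputable def Jker (α : ℝ) (φ : ℝ → ℝ) (s : ℝ) : ℝ :=
  ∫ u in (0:ℝ)..s, u ^ (-α) * φ (s - u)

lemma kint (hα1 : α < 1) (a b : ℝ) :
    IntervalIntegrable (fun u : ℝ => u ^ (-α)) volume a b :=
  intervalIntegral.intervalIntegrable_rpow' (by linarith)

lemma kmulint (hα1 : α < 1) {φ : ℝ → ℝ} (hφ : Continuous φ) (c a b : ℝ) :
    IntervalIntegrable (fun u : ℝ => u ^ (-α) * φ (c - u)) volume a b :=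
  (kint hα1 a b).mul_continuousOn (hφ.comp (continuous_const.sub continuous_id)).continuousOn

lemma Jker_eq (φ : ℝ → ℝ) (s : ℝ) :
    ∫ τ in (0:ℝ)..s, (s - τ) ^ (-α) * φ τ = Jker α φ s := by
  have h := intervalIntegral.integral_comp_sub_left (a := (0:ℝ)) (b := s)
    (fun u => u ^ (-α) * φ (s - u)) s
  simp only [sub_sub_cancel, sub_zero, sub_self] at h
  exact h

lemma kint_val (hα1 : α < 1) {s : ℝ} (hs : 0 ≤ s) :
    ∫ u in (0:ℝ)..s, u ^ (-α) = s ^ (1 - α) / (1 - α) := by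
  rw [integral_rpow (Or.inl (by linarith : (-1:ℝ) < -α)),
    Real.zero_rpow (by intro h; nlinarith [h] : (-α) + 1 ≠ 0), show -α + 1 = 1 - α by ring]
  ring

lemma Jker_norm_le (hα : 0 < α) (hα1 : α < 1) {φ : ℝ → ℝ} (hφ : Continuous φ)
    {M s : ℝ} (hs : 0 ≤ s) (hM : ∀ x ∈ Icc (0:ℝ) s, |φ x| ≤ M) :
    |Jker α φ s| ≤ M * (s ^ (1 - α) / (1 - α)) := by
  have hM0 : 0 ≤ M := le_trans (abs_nonneg _) (hM 0 ⟨le_rfl, hs⟩)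
  have h1 : ∀ᵐ u ∂volume.restrict (Set.uIoc (0:ℝ) s), ‖u ^ (-α) * φ (s - u)‖ ≤ u ^ (-α) * M := by
    refine (ae_restrict_iff' measurableSet_uIoc).2 (Eventually.of_forall fun u hu => ?_)
    rw [uIoc_of_le hs] at hu
    have hu0 : 0 < u := hu.1
    have : |φ (s - u)| ≤ M := hM _ ⟨by linarith [hu.2], by linarith [hu.1]⟩
    rw [Real.norm_eq_abs, abs_mul, abs_of_nonneg (Real.rpow_nonneg hu0.le _)]
    exact mul_le_mul_of_nonneg_left this (Real.rpow_nonneg hu0.le _)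
  have h2 : IntervalIntegrable (fun u : ℝ => u ^ (-α) * M) volume 0 s :=
    (kint hα1 0 s).mul_const M
  have h3 := intervalIntegral.norm_integral_le_abs_of_norm_le h1 h2
  rw [Real.norm_eq_abs] at h3
  refine h3.trans (le_of_eq ?_)
  rw [intervalIntegral.integral_mul_const, kint_val hα1 hs,
    abs_of_nonneg (mul_nonneg (div_nonneg (Real.rpow_nonneg hs _) (by linarith)) hM0)]
  ring


lemma measurable_ker : Measurable fun u : ℝ => u ^ (-α) := by fun_prop

lemma hasDerivAt_Jker (hα : 0 < α) (hα1 : α < 1) {f : ℝ → ℝ} (hf : ContDiff ℝ 1 f)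
    {s : ℝ} (hs : 0 < s) :
    HasDerivAt (Jker α f) (s ^ (-α) * f 0 + Jker α (deriv f) s) s := by
  have hfc : Continuous f := hf.continuous
  have hf'c : Continuous (deriv f) := hf.continuous_deriv le_rfl
  have hfd : ∀ x : ℝ, HasDerivAt f (deriv f x) x :=
    fun x => (hf.differentiable one_ne_zero x).hasDerivAt
  -- A: moving endpoint, frozen parameter
  have hA : HasDerivAt (fun s' => ∫ u in (0:ℝ)..s', u ^ (-α) * f (s - u))
      (s ^ (-α) * f 0) s := by
    have hmeas : StronglyMeasurableAtFilter (fun u : ℝ => u ^ (-α) * f (s - u))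
        (nhds s) volume :=
      ⟨univ, univ_mem, ((measurable_ker.mul
        ((hfc.comp (continuous_const.sub continuous_id)).measurable)).aestronglyMeasurable)⟩
    have hcont : ContinuousAt (fun u : ℝ => u ^ (-α) * f (s - u)) s :=
      (Real.continuousAt_rpow_const s (-α) (Or.inl hs.ne')).mul
        ((hfc.comp (continuous_const.sub continuous_id)).continuousAt)
    have h := intervalIntegral.integral_hasDerivAt_right (kmulint hα1 hfc s 0 s) hmeas hcont
    simpa using h
  -- B: frozen endpoint, moving parameter, by dominated convergence
  have hB : HasDerivAt (fun b => ∫ u in (0:ℝ)..s, u ^ (-α) * f (b - u))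
      (∫ u in (0:ℝ)..s, u ^ (-α) * deriv f (s - u)) s := by
    obtain ⟨M, hM⟩ := (isCompact_Icc (a := -1 - s) (b := s + 1)).exists_bound_of_continuousOn
      hf'c.continuousOn
    have h := intervalIntegral.hasDerivAt_integral_of_dominated_loc_of_deriv_le
      (F := fun x u => u ^ (-α) * f (x - u)) (F' := fun x u => u ^ (-α) * deriv f (x - u))
      (x₀ := s) (a := 0) (b := s) (μ := volume) (bound := fun u => u ^ (-α) * M)
      (s := Metric.ball s 1) (Metric.ball_mem_nhds s one_pos)
      (Eventually.of_forall fun x => (measurable_ker.mul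
        ((hfc.comp (continuous_const.sub continuous_id)).measurable)).aestronglyMeasurable)
      (kmulint hα1 hfc s 0 s)
      ((measurable_ker.mul
        ((hf'c.comp (continuous_const.sub continuous_id)).measurable)).aestronglyMeasurable)
      (Eventually.of_forall fun u hu x hx => ?_)
      ((kint hα1 0 s).mul_const M)
      (Eventually.of_forall fun u hu x hx => ?_)
    · exact h.2
    · -- bound
      rw [uIoc_of_le hs.le] at hu
      have hu0 : (0:ℝ) < u := hu.1
      have harg : x - u ∈ Icc (-1 - s) (s + 1) := by
        rw [Metric.mem_ball, Real.dist_eq] at hx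
        have h1 : |x - s| < 1 := hx
        have := abs_lt.1 h1
        constructor <;> [nlinarith [hu.2, this.1]; nlinarith [hu0, this.2]]
      have := hM _ harg
      rw [Real.norm_eq_abs, abs_mul, abs_of_nonneg (Real.rpow_nonneg hu0.le _)]
      exact mul_le_mul_of_nonneg_left (by simpa [Real.norm_eq_abs] using this)
        (Real.rpow_nonneg hu0.le _)
    · -- differentiability in the parameter
      have hcomp : HasDerivAt (fun x : ℝ => f (x - u)) (deriv f (x - u)) x := by
        simpa [Function.comp_def] using (hfd (x - u)).comp x ((hasDerivAt_id x).sub_const u)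
      simpa using hcomp.const_mul (u ^ (-α))
  -- R: the remainder is o(s' - s)
  set R : ℝ → ℝ := fun s' => ∫ u in s..s', u ^ (-α) * (f (s' - u) - f (s - u)) with hR_def
  have hR : HasDerivAt R 0 s := by
    obtain ⟨L, hL⟩ := (isCompact_Icc (a := -s) (b := s)).exists_bound_of_continuousOn
      hf'c.continuousOn
    have hlip : ∀ x ∈ Icc (-s) s, ∀ y ∈ Icc (-s) s, ‖f y - f x‖ ≤ L * ‖y - x‖ :=
      fun x hx y hy => (convex_Icc _ _).norm_image_sub_le_of_norm_deriv_le
        (fun z _ => hf.differentiable one_ne_zero z) (fun z hz => hL z hz) hx hy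
    rw [hasDerivAt_iff_isLittleO]
    have hRs : R s = 0 := intervalIntegral.integral_same
    simp only [hRs, smul_zero, sub_zero]
    have hbig : (fun s' => R s') =O[nhds s] (fun s' => (s' - s) * (s' - s)) := by
      rw [Asymptotics.isBigO_iff]
      refine ⟨(s/2) ^ (-α) * L, ?_⟩
      filter_upwards [Metric.ball_mem_nhds s (half_pos hs)] with s' hs'
      rw [Metric.mem_ball, Real.dist_eq] at hs'
      have habs := abs_lt.1 hs'
      have hptwise : ∀ u ∈ Set.uIoc s s',
          ‖u ^ (-α) * (f (s' - u) - f (s - u))‖ ≤ (s/2) ^ (-α) * (L * |s' - s|) := by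
        intro u hu
        have hmin : s/2 < min s s' := by rcases min_cases s s' with ⟨h, _⟩ | ⟨h, _⟩ <;> simp [h] <;> nlinarith
        have hmax : max s s' < s + s/2 := by rcases max_cases s s' with ⟨h, _⟩ | ⟨h, _⟩ <;> simp [h] <;> nlinarith
        have hu1 : s/2 < u := lt_of_lt_of_le hmin hu.1.le
        have hu2 : u < s + s/2 := lt_of_le_of_lt hu.2 hmax
        have hk : u ^ (-α) ≤ (s/2) ^ (-α) :=
          Real.rpow_le_rpow_of_nonpos (half_pos hs) hu1.le (by linarith)
        have ha1 : s' - u ∈ Icc (-s) s := ⟨by nlinarith [habs.1], by nlinarith [habs.2]⟩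
        have ha2 : s - u ∈ Icc (-s) s := ⟨by nlinarith, by nlinarith⟩
        have hfl : ‖f (s' - u) - f (s - u)‖ ≤ L * |s' - s| := by
          have := hlip _ ha2 _ ha1
          simpa [Real.norm_eq_abs, show s' - u - (s - u) = s' - s by ring] using this
        rw [norm_mul]
        have h0 : ‖u ^ (-α)‖ = u ^ (-α) := by
          rw [Real.norm_eq_abs, abs_of_nonneg (Real.rpow_nonneg (by linarith) _)]
        rw [h0]
        exact mul_le_mul hk hfl (norm_nonneg _) (Real.rpow_nonneg (by positivity) _)
      have := intervalIntegral.norm_integral_le_of_norm_le_const hptwise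
      calc ‖R s'‖ ≤ (s/2) ^ (-α) * (L * |s' - s|) * |s' - s| := this
        _ = (s/2) ^ (-α) * L * (|s' - s| * |s' - s|) := by ring
        _ ≤ (s/2) ^ (-α) * L * ‖(s' - s) * (s' - s)‖ := by
            rw [Real.norm_eq_abs, abs_mul]
    have hsmall : (fun s' : ℝ => (s' - s) * (s' - s)) =o[nhds s] (fun s' => s' - s) := by
      have h1 : (fun s' : ℝ => s' - s) =o[nhds s] (fun _ : ℝ => (1:ℝ)) :=
        (Asymptotics.isLittleO_one_iff ℝ).2 (by
          simpa using (continuous_sub_right s).tendsto s)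
      simpa using h1.mul_isBigO (Asymptotics.isBigO_refl (fun s' : ℝ => s' - s) (nhds s))
    exact hbig.trans_isLittleO hsmall
  -- combine
  have hG : HasDerivAt (fun s' => ((∫ u in (0:ℝ)..s', u ^ (-α) * f (s - u)) +
      (∫ u in (0:ℝ)..s, u ^ (-α) * f (s' - u)) - Jker α f s) + R s')
      (s ^ (-α) * f 0 + Jker α (deriv f) s) s := by
    have h := ((hA.add hB).sub_const (Jker α f s)).add hR
    simpa [Jker, Pi.add_def] using h
  refine hG.congr_of_eventuallyEq ?_
  filter_upwards [Metric.ball_mem_nhds s (half_pos hs)] with s' _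
  have e1 : (∫ u in (0:ℝ)..s', u ^ (-α) * f (s - u)) =
      (∫ u in (0:ℝ)..s, u ^ (-α) * f (s - u)) + ∫ u in s..s', u ^ (-α) * f (s - u) :=
    (intervalIntegral.integral_add_adjacent_intervals
      (kmulint hα1 hfc s 0 s) (kmulint hα1 hfc s s s')).symm
  have e2 : Jker α f s' =
      (∫ u in (0:ℝ)..s, u ^ (-α) * f (s' - u)) + ∫ u in s..s', u ^ (-α) * f (s' - u) :=
    (intervalIntegral.integral_add_adjacent_intervals
      (kmulint hα1 hfc s' 0 s) (kmulint hα1 hfc s' s s')).symm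
  have e3 : R s' = (∫ u in s..s', u ^ (-α) * f (s' - u)) -
      ∫ u in s..s', u ^ (-α) * f (s - u) := by
    rw [hR_def]
    simp only [mul_sub]
    exact intervalIntegral.integral_sub (kmulint hα1 hfc s' s s') (kmulint hα1 hfc s s s')
  have e4 : Jker α f s = ∫ u in (0:ℝ)..s, u ^ (-α) * f (s - u) := rfl
  rw [Jker] at e2 ⊢
  linarith [e1, e2, e3]

lemma continuousOn_Jker (hα : 0 < α) (hα1 : α < 1) {f : ℝ → ℝ} (hf : ContDiff ℝ 1 f)
    {T : ℝ} (hT : 0 < T) : ContinuousOn (Jker α f) (Icc 0 T) := by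
  obtain ⟨M, hM⟩ := (isCompact_Icc (a := (0:ℝ)) (b := T)).exists_bound_of_continuousOn
    hf.continuous.continuousOn
  intro s hsm
  rcases eq_or_lt_of_le hsm.1 with h0 | h0
  · -- s = 0
    subst h0
    have hJ0 : Jker α f 0 = 0 := intervalIntegral.integral_same
    unfold ContinuousWithinAt
    rw [hJ0]
    apply squeeze_zero_norm'
      (a := fun x => M * (x ^ (1 - α) / (1 - α)))
    · filter_upwards [self_mem_nhdsWithin] with x hx
      exact Jker_norm_le hα hα1 hf.continuous hx.1
        (fun y hy => by
          simpa [Real.norm_eq_abs] using hM y ⟨hy.1, le_trans hy.2 hx.2⟩)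
    · have hc : ContinuousAt (fun x : ℝ => M * (x ^ (1 - α) / (1 - α))) 0 :=
        ((Real.continuousAt_rpow_const 0 (1 - α) (Or.inr (by linarith))).div_const _).const_mul M
      have := hc.tendsto.mono_left (nhdsWithin_le_nhds (s := Icc 0 T))
      simpa [Real.zero_rpow (by linarith : (1:ℝ) - α ≠ 0)] using this
  · exact ((hasDerivAt_Jker hα hα1 hf h0).continuousAt).continuousWithinAt

lemma ker_integral (hα1 : α < 1) {t : ℝ} (ht : 0 ≤ t) :
    ∫ τ in (0:ℝ)..t, (t - τ) ^ (-α) = t ^ (1 - α) / (1 - α) := by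
  have h := Jker_eq (α := α) (fun _ => (1:ℝ)) t
  simp only [mul_one] at h
  rw [h, Jker]
  simp only [mul_one]
  exact kint_val hα1 ht

end Stmt11Aux

open MeasureTheory Set Filter intervalIntegral in
/-- Lemma 2.1: fractional integration by parts with boundary terms. -/
theorem stmt_11 (T α : ℝ) (hT : 0 < T) (hα : 0 < α) (hα1 : α < 1)
    (f g : ℝ → ℝ) (hf : ContDiff ℝ 1 f) (hg : ContDiff ℝ 1 g) :
    ∫ t in (0:ℝ)..T, rlDerivL α f t * g t =
      (∫ t in (0:ℝ)..T, f t * caputoR α T g t) +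
        (g T * fracIntL (1 - α) f T - g 0 * fracIntL (1 - α) f 0) := by
  have hfc : Continuous f := hf.continuous
  have hgc : Continuous g := hg.continuous
  have hf'c : Continuous (deriv f) := hf.continuous_deriv le_rfl
  have hg'c : Continuous (deriv g) := hg.continuous_deriv le_rfl
  have hgd : ∀ x : ℝ, HasDerivAt g (deriv g x) x :=
    fun x => (hg.differentiable one_ne_zero x).hasDerivAt
  set c : ℝ := (Real.Gamma (1 - α))⁻¹ with hc_def
  set Fc : ℝ → ℝ := fun s => c * Stmt11Aux.Jker α f s with hFc_def
  have hFrac : ∀ s, fracIntL (1 - α) f s = Fc s := by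
    intro s
    rw [fracIntL, hFc_def]
    simp only [show (1:ℝ) - α - 1 = -α by ring]
    rw [Stmt11Aux.Jker_eq]
  have hrlF : rlDerivL α f = deriv Fc := by
    funext t
    rw [rlDerivL]
    congr 1
    funext s
    rw [hFc_def, Stmt11Aux.Jker_eq]
  have hFcHasDeriv : ∀ t : ℝ, 0 < t →
      HasDerivAt Fc (c * (t ^ (-α) * f 0 + Stmt11Aux.Jker α (deriv f) t)) t :=
    fun t ht => (Stmt11Aux.hasDerivAt_Jker hα hα1 hf ht).const_mul c
  have hrl_eq : ∀ t : ℝ, 0 < t →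
      rlDerivL α f t = c * (t ^ (-α) * f 0 + Stmt11Aux.Jker α (deriv f) t) := by
    intro t ht
    rw [hrlF]
    exact (hFcHasDeriv t ht).deriv
  have hFcont : ContinuousOn Fc (Icc 0 T) :=
    continuousOn_const.mul (Stmt11Aux.continuousOn_Jker hα hα1 hf hT)
  obtain ⟨Mf', hMf'⟩ := (isCompact_Icc (a := (0:ℝ)) (b := T)).exists_bound_of_continuousOn
    hf'c.continuousOn
  obtain ⟨Mg, hMg⟩ := (isCompact_Icc (a := (0:ℝ)) (b := T)).exists_bound_of_continuousOn
    hgc.continuousOn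
  have hMf'0 : 0 ≤ Mf' := le_trans (norm_nonneg _) (hMf' 0 ⟨le_rfl, hT.le⟩)
  have hMg0 : 0 ≤ Mg := le_trans (norm_nonneg _) (hMg 0 ⟨le_rfl, hT.le⟩)
  set CM : ℝ := Mf' * (T ^ (1 - α) / (1 - α)) with hCM_def
  have hCM0 : 0 ≤ CM := mul_nonneg hMf'0 (div_nonneg (Real.rpow_nonneg hT.le _) (by linarith))
  have I1 : IntervalIntegrable (fun t => rlDerivL α f t * g t) volume 0 T := by
    rw [intervalIntegrable_iff_integrableOn_Ioc_of_le hT.le]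
    have hbd_int : IntervalIntegrable
        (fun t : ℝ => |c| * Mg * (t ^ (-α) * |f 0|) + |c| * Mg * CM) volume 0 T :=
      (((Stmt11Aux.kint hα1 0 T).mul_const _).const_mul _).add intervalIntegrable_const
    refine Integrable.mono' ((intervalIntegrable_iff_integrableOn_Ioc_of_le hT.le).1 hbd_int)
      ?_ ?_
    · rw [hrlF]
      exact (((measurable_deriv _).mul hgc.measurable).aestronglyMeasurable).restrict
    · refine (ae_restrict_iff' measurableSet_Ioc).2 (Eventually.of_forall fun t ht => ?_)
      have ht0 : 0 < t := ht.1
      rw [hrl_eq t ht0]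
      have hJ : |Stmt11Aux.Jker α (deriv f) t| ≤ CM := by
        have h1 := Stmt11Aux.Jker_norm_le hα hα1 hf'c ht0.le
          (fun y hy => by simpa [Real.norm_eq_abs] using hMf' y ⟨hy.1, le_trans hy.2 ht.2⟩)
        refine h1.trans ?_
        rw [hCM_def]
        have h2 : t ^ (1 - α) / (1 - α) ≤ T ^ (1 - α) / (1 - α) := by
          have h3 : t ^ (1 - α) ≤ T ^ (1 - α) := Real.rpow_le_rpow ht0.le ht.2 (by linarith)
          exact (div_le_div_iff_of_pos_right (by linarith : (0:ℝ) < 1 - α)).2 h3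
        exact mul_le_mul_of_nonneg_left h2 hMf'0
      have hgt : |g t| ≤ Mg := by simpa [Real.norm_eq_abs] using hMg t ⟨ht0.le, ht.2⟩
      rw [Real.norm_eq_abs, abs_mul, abs_mul]
      have htk : |t ^ (-α)| = t ^ (-α) := abs_of_nonneg (Real.rpow_nonneg ht0.le _)
      calc |c| * |t ^ (-α) * f 0 + Stmt11Aux.Jker α (deriv f) t| * |g t|
          ≤ |c| * (t ^ (-α) * |f 0| + CM) * Mg := by
            refine mul_le_mul (mul_le_mul_of_nonneg_left ?_ (abs_nonneg c)) hgt (abs_nonneg _)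
              (mul_nonneg (abs_nonneg c)
                (add_nonneg (mul_nonneg (Real.rpow_nonneg ht0.le _) (abs_nonneg _)) hCM0))
            refine (abs_add_le _ _).trans ?_
            rw [abs_mul, htk]
            exact add_le_add le_rfl hJ
        _ = |c| * Mg * (t ^ (-α) * |f 0|) + |c| * Mg * CM := by ring
  have I2 : IntervalIntegrable (fun t => Fc t * deriv g t) volume 0 T := by
    apply ContinuousOn.intervalIntegrable
    rw [uIcc_of_le hT.le]
    exact hFcont.mul hg'c.continuousOn
  have hderiv : ∀ t ∈ Ioo (0:ℝ) T, HasDerivWithinAt (fun t => Fc t * g t)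
      (rlDerivL α f t * g t + Fc t * deriv g t) (Ioi t) t := by
    intro t ht
    have h1 : HasDerivAt Fc (rlDerivL α f t) t := by
      rw [hrl_eq t ht.1]; exact hFcHasDeriv t ht.1
    exact (h1.mul (hgd t)).hasDerivWithinAt
  have stepA := intervalIntegral.integral_eq_sub_of_hasDeriv_right_of_le hT.le
    (hFcont.mul hgc.continuousOn) hderiv (I1.add I2)
  have hsplit : (∫ t in (0:ℝ)..T, (rlDerivL α f t * g t + Fc t * deriv g t)) =
      (∫ t in (0:ℝ)..T, rlDerivL α f t * g t) + ∫ t in (0:ℝ)..T, Fc t * deriv g t :=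
    intervalIntegral.integral_add I1 I2
  have stepB : (∫ t in (0:ℝ)..T, Fc t * deriv g t) =
      -∫ t in (0:ℝ)..T, f t * caputoR α T g t := by
    obtain ⟨Cf, hCf⟩ := (isCompact_Icc (a := (0:ℝ)) (b := T)).exists_bound_of_continuousOn
      hfc.continuousOn
    obtain ⟨Cg', hCg'⟩ := (isCompact_Icc (a := (0:ℝ)) (b := T)).exists_bound_of_continuousOn
      hg'c.continuousOn
    have hCf0 : 0 ≤ Cf := le_trans (norm_nonneg _) (hCf 0 ⟨le_rfl, hT.le⟩)
    have hCg'0 : 0 ≤ Cg' := le_trans (norm_nonneg _) (hCg' 0 ⟨le_rfl, hT.le⟩)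
    set Φ : ℝ × ℝ → ℝ := Set.indicator {p : ℝ × ℝ | p.2 < p.1}
      (fun p => (p.1 - p.2) ^ (-α) * f p.2 * deriv g p.1) with hΦ_def
    have hS : MeasurableSet {p : ℝ × ℝ | p.2 < p.1} :=
      measurableSet_lt measurable_snd measurable_fst
    have hΦm : Measurable Φ := by
      apply Measurable.indicator ?_ hS
      have h1 : Measurable fun p : ℝ × ℝ => (p.1 - p.2) ^ (-α) := by fun_prop
      exact (h1.mul (hfc.measurable.comp measurable_snd)).mul
        (hg'c.measurable.comp measurable_fst)
    have hslice : ∀ t : ℝ, (fun τ => Φ (t, τ)) =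
        Set.indicator (Iio t) (fun τ => (t - τ) ^ (-α) * f τ * deriv g t) := by
      intro t; funext τ
      by_cases h : τ < t <;> simp [hΦ_def, Set.indicator_apply, h]
    have htslice : ∀ τ : ℝ, (fun t => Φ (t, τ)) =
        Set.indicator (Ioi τ) (fun t => (t - τ) ^ (-α) * f τ * deriv g t) := by
      intro τ; funext t
      by_cases h : τ < t <;> simp [hΦ_def, Set.indicator_apply, h, Set.mem_Ioi]
    have hcomp : ∀ (t a b : ℝ), IntervalIntegrable (fun τ : ℝ => (t - τ) ^ (-α)) volume a b := by
      intro t a b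
      have h := (Stmt11Aux.kint (α := α) hα1 (t - a) (t - b)).comp_sub_left t
      simpa using h
    have hrowint : ∀ t : ℝ, IntegrableOn (fun τ => (t - τ) ^ (-α) * f τ * deriv g t)
        (Ioc (0:ℝ) T) volume := fun t =>
      (intervalIntegrable_iff_integrableOn_Ioc_of_le hT.le).1
        (((hcomp t 0 T).mul_continuousOn hfc.continuousOn).mul_const _)
    have hslice_int : ∀ t : ℝ, Integrable (fun τ => Φ (t, τ))
        (volume.restrict (Ioc (0:ℝ) T)) := by
      intro t
      rw [hslice t]
      exact (hrowint t).indicator measurableSet_Iio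
    have hInt : Integrable (Function.uncurry fun t τ => Φ (t, τ))
        ((volume.restrict (Ioc (0:ℝ) T)).prod (volume.restrict (Ioc (0:ℝ) T))) := by
      have huncurry : (Function.uncurry fun t τ => Φ (t, τ)) = Φ := rfl
      rw [huncurry, MeasureTheory.integrable_prod_iff hΦm.aestronglyMeasurable]
      constructor
      · exact Eventually.of_forall fun t => hslice_int t
      · refine Integrable.mono' (g := fun _ => Cf * Cg' * (T ^ (1 - α) / (1 - α)))
          (integrableOn_const measure_Ioc_lt_top.ne) ?_ ?_
        · exact hΦm.aestronglyMeasurable.norm.integral_prod_right'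
        · refine (ae_restrict_iff' measurableSet_Ioc).2 (Eventually.of_forall fun t ht => ?_)
          have hnonneg : 0 ≤ ∫ τ, ‖Φ (t, τ)‖ ∂(volume.restrict (Ioc (0:ℝ) T)) :=
            integral_nonneg fun τ => norm_nonneg _
          rw [Real.norm_eq_abs, abs_of_nonneg hnonneg]
          have hdom_int : Integrable
              (Set.indicator (Ioo 0 t) fun τ => (t - τ) ^ (-α) * (Cf * Cg'))
              (volume.restrict (Ioc (0:ℝ) T)) :=
            ((intervalIntegrable_iff_integrableOn_Ioc_of_le hT.le).1
              ((hcomp t 0 T).mul_const _)).indicator measurableSet_Ioo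
          have hmono : ∀ᵐ τ ∂(volume.restrict (Ioc (0:ℝ) T)), ‖Φ (t, τ)‖ ≤
              Set.indicator (Ioo 0 t) (fun τ => (t - τ) ^ (-α) * (Cf * Cg')) τ := by
            refine (ae_restrict_iff' measurableSet_Ioc).2 (Eventually.of_forall fun τ hτ => ?_)
            by_cases h : τ < t
            · have hτt : τ ∈ Ioo (0:ℝ) t := ⟨hτ.1, h⟩
              rw [Set.indicator_of_mem hτt]
              have hΦval : Φ (t, τ) = (t - τ) ^ (-α) * f τ * deriv g t := by
                rw [hΦ_def]
                exact Set.indicator_of_mem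
                  (show (t, τ) ∈ {p : ℝ × ℝ | p.2 < p.1} from h) _
              rw [hΦval, Real.norm_eq_abs, abs_mul, abs_mul,
                abs_of_nonneg (Real.rpow_nonneg (by linarith : (0:ℝ) ≤ t - τ) _)]
              have h1 : |f τ| ≤ Cf := by
                simpa [Real.norm_eq_abs] using hCf τ ⟨hτ.1.le, hτ.2⟩
              have h2 : |deriv g t| ≤ Cg' := by
                simpa [Real.norm_eq_abs] using hCg' t ⟨ht.1.le, ht.2⟩
              calc (t - τ) ^ (-α) * |f τ| * |deriv g t|
                  ≤ (t - τ) ^ (-α) * Cf * Cg' :=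
                    mul_le_mul (mul_le_mul_of_nonneg_left h1
                      (Real.rpow_nonneg (by linarith) _)) h2 (abs_nonneg _)
                      (mul_nonneg (Real.rpow_nonneg (by linarith) _) hCf0)
                _ = (t - τ) ^ (-α) * (Cf * Cg') := by ring
            · have hΦval : Φ (t, τ) = 0 := by
                rw [hΦ_def]
                exact Set.indicator_of_notMem
                  (show (t, τ) ∉ {p : ℝ × ℝ | p.2 < p.1} from h) _
              rw [hΦval, norm_zero]
              apply Set.indicator_nonneg
              intro x hx
              exact mul_nonneg (Real.rpow_nonneg (by linarith [hx.2] : (0:ℝ) ≤ t - x) _)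
                (mul_nonneg hCf0 hCg'0)
          calc (∫ τ, ‖Φ (t, τ)‖ ∂(volume.restrict (Ioc (0:ℝ) T)))
              ≤ ∫ τ, Set.indicator (Ioo 0 t) (fun τ => (t - τ) ^ (-α) * (Cf * Cg')) τ
                  ∂(volume.restrict (Ioc (0:ℝ) T)) :=
                integral_mono_ae (hslice_int t).norm hdom_int hmono
            _ = ∫ τ in Ioo (0:ℝ) t, (t - τ) ^ (-α) * (Cf * Cg') := by
                have hsub : Ioo (0:ℝ) t ⊆ Ioc 0 T :=
                  fun x hx => ⟨hx.1, le_trans hx.2.le ht.2⟩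
                rw [MeasureTheory.integral_indicator measurableSet_Ioo,
                  Measure.restrict_restrict measurableSet_Ioo,
                  inter_eq_self_of_subset_left hsub]
            _ = (∫ τ in (0:ℝ)..t, (t - τ) ^ (-α)) * (Cf * Cg') := by
                rw [← integral_Ioc_eq_integral_Ioo, ← intervalIntegral.integral_of_le ht.1.le,
                  ← intervalIntegral.integral_mul_const]
            _ = t ^ (1 - α) / (1 - α) * (Cf * Cg') := by
                rw [Stmt11Aux.ker_integral hα1 ht.1.le]
            _ ≤ Cf * Cg' * (T ^ (1 - α) / (1 - α)) := by
                have h3 : t ^ (1 - α) ≤ T ^ (1 - α) :=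
                  Real.rpow_le_rpow ht.1.le ht.2 (by linarith)
                have h4 : t ^ (1 - α) / (1 - α) ≤ T ^ (1 - α) / (1 - α) :=
                  (div_le_div_iff_of_pos_right (by linarith : (0:ℝ) < 1 - α)).2 h3
                nlinarith [mul_nonneg hCf0 hCg'0]
    have hswap : (∫ t in Ioc (0:ℝ) T, ∫ τ in Ioc (0:ℝ) T, Φ (t, τ)) =
        ∫ τ in Ioc (0:ℝ) T, ∫ t in Ioc (0:ℝ) T, Φ (t, τ) :=
      MeasureTheory.integral_integral_swap hInt
    have hL : ∀ t ∈ Ioc (0:ℝ) T, (∫ τ in Ioc (0:ℝ) T, Φ (t, τ)) =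
        (∫ τ in (0:ℝ)..t, (t - τ) ^ (-α) * f τ) * deriv g t := by
      intro t ht
      rw [hslice t, MeasureTheory.integral_indicator measurableSet_Iio,
        Measure.restrict_restrict measurableSet_Iio]
      have hset : Iio t ∩ Ioc 0 T = Ioo 0 t := by
        ext τ
        simp only [mem_inter_iff, mem_Iio, mem_Ioc, mem_Ioo]
        constructor
        · rintro ⟨h1, h2, _⟩; exact ⟨h2, h1⟩
        · rintro ⟨h1, h2⟩; exact ⟨h2, h1, le_trans h2.le ht.2⟩
      rw [hset, ← integral_Ioc_eq_integral_Ioo, ← intervalIntegral.integral_of_le ht.1.le,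
        ← intervalIntegral.integral_mul_const]
    have hR : ∀ τ ∈ Ioc (0:ℝ) T, (∫ t in Ioc (0:ℝ) T, Φ (t, τ)) =
        f τ * ∫ t in τ..T, deriv g t * (t - τ) ^ (-α) := by
      intro τ hτ
      rw [htslice τ, MeasureTheory.integral_indicator measurableSet_Ioi,
        Measure.restrict_restrict measurableSet_Ioi]
      have hset : Ioi τ ∩ Ioc 0 T = Ioc τ T := by
        ext t
        simp only [mem_inter_iff, mem_Ioi, mem_Ioc]
        constructor
        · rintro ⟨h1, _, h3⟩; exact ⟨h1, h3⟩
        · rintro ⟨h1, h2⟩; exact ⟨h1, lt_trans hτ.1 h1, h2⟩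
      rw [hset, ← intervalIntegral.integral_of_le hτ.2, ← intervalIntegral.integral_const_mul]
      apply intervalIntegral.integral_congr
      intro x _
      ring
    have hLHS : (∫ t in (0:ℝ)..T, Fc t * deriv g t) =
        c * ∫ t in Ioc (0:ℝ) T, ∫ τ in Ioc (0:ℝ) T, Φ (t, τ) := by
      rw [← MeasureTheory.integral_const_mul, intervalIntegral.integral_of_le hT.le]
      refine setIntegral_congr_fun measurableSet_Ioc fun t ht => ?_
      rw [hL t ht, hFc_def]
      dsimp only
      rw [← Stmt11Aux.Jker_eq]
      ring
    have hRHS : (∫ τ in (0:ℝ)..T, f τ * caputoR α T g τ) =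
        (-c) * ∫ τ in Ioc (0:ℝ) T, ∫ t in Ioc (0:ℝ) T, Φ (t, τ) := by
      rw [← MeasureTheory.integral_const_mul, intervalIntegral.integral_of_le hT.le]
      refine setIntegral_congr_fun measurableSet_Ioc fun τ hτ => ?_
      rw [hR τ hτ, caputoR, hc_def]
      ring
    rw [hLHS, hRHS, hswap]
    ring
  rw [hFrac T, hFrac 0, mul_comm (g T), mul_comm (g 0)]
  rw [hsplit] at stepA
  linarith [stepA, stepB, show (Fc * g) T = Fc T * g T from rfl, show (Fc * g) 0 = Fc 0 * g 0 from rfl]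
end

section
/- Let 0 < α < 1 and let w : [0,T] → ℝ be continuously differentiable with w(0) = 0. Then for every t ∈ (0,T], w(t) · ∂^α w(t) ≥ (1/2) ∂^α (w²)(t), where ∂^α denotes the left Caputo fractional derivative. -/
/-- Left Caputo fractional derivative of order `α` with base point `0`. -/
noncomputable def caputoL (α : ℝ) (f : ℝ → ℝ) (t : ℝ) : ℝ :=
  (Real.Gamma (1 - α))⁻¹ * ∫ τ in (0:ℝ)..t, deriv f τ * (t - τ) ^ (-α)

open MeasureTheory intervalIntegral Set Filter Topology

lemma rpow_ii (t α : ℝ) (hα1 : α < 1) :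
    IntervalIntegrable (fun τ : ℝ => (t - τ) ^ (-α)) volume 0 t := by
  have h := ((intervalIntegral.intervalIntegrable_rpow' (a := 0) (b := t) (r := -α)
    (by linarith)).comp_sub_left t).symm
  simpa using h

-- key positivity lemma
lemma key (t α : ℝ) (ht : 0 < t) (hα : 0 < α) (hα1 : α < 1)
    (w : ℝ → ℝ) (hw : ContDiff ℝ 1 w) :
    0 ≤ ∫ τ in (0:ℝ)..t, (w t - w τ) * deriv w τ * (t - τ) ^ (-α) := by
  have hwd : ∀ x : ℝ, HasDerivAt w (deriv w x) x :=
    fun x => (hw.differentiable one_ne_zero x).hasDerivAt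
  have hwc : Continuous (deriv w) := hw.continuous_deriv le_rfl
  -- bound on deriv on [0,t]
  obtain ⟨C, hC⟩ := (isCompact_Icc (a := (0:ℝ)) (b := t)).exists_bound_of_continuousOn
    hwc.continuousOn
  have hC0 : 0 ≤ C := le_trans (norm_nonneg _) (hC 0 (by constructor <;> linarith))
  set f : ℝ → ℝ := fun τ => (w t - w τ) * deriv w τ * (t - τ) ^ (-α) with hf
  have hfint : IntervalIntegrable f volume 0 t := by
    apply (rpow_ii t α hα1).continuousOn_mul
    exact ((continuousOn_const.sub hw.continuous.continuousOn).mul hwc.continuousOn)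
  set g : ℝ → ℝ := fun s => ∫ τ in (0:ℝ)..s, f τ with hg
  -- Lipschitz bound
  have lip : ∀ s ∈ Icc (0:ℝ) t, |w t - w s| ≤ C * (t - s) := by
    intro s hs
    have := Convex.norm_image_sub_le_of_norm_deriv_le
      (f := w) (s := Icc (0:ℝ) t)
      (fun x _ => hw.differentiable one_ne_zero x) hC (convex_Icc 0 t) hs
      (right_mem_Icc.2 ht.le)
    rw [Real.norm_eq_abs, Real.norm_eq_abs] at this
    calc |w t - w s| ≤ C * |t - s| := this
    _ = C * (t - s) := by rw [abs_of_nonneg (by linarith [hs.2])]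
  -- IBP lower bound for s < t
  have hbound : ∀ s ∈ Ico (0:ℝ) t, -((1/2) * C^2 * (t - s) ^ (2 - α)) ≤ g s := by
    intro s hs
    obtain ⟨hs0, hst⟩ := hs
    have hts : 0 < t - s := by linarith
    -- functions for IBP on [0,s]
    set u : ℝ → ℝ := fun τ => (t - τ) ^ (-α) with hu
    set u' : ℝ → ℝ := fun τ => α * (t - τ) ^ (-α - 1) with hu'
    set v : ℝ → ℝ := fun τ => -((1:ℝ)/2) * (w t - w τ)^2 with hv
    set v' : ℝ → ℝ := fun τ => (w t - w τ) * deriv w τ with hv'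
    have hpos : ∀ x ∈ uIcc (0:ℝ) s, 0 < t - x := by
      intro x hx
      rw [uIcc_of_le hs0] at hx
      have := hx.2; linarith
    have hud : ∀ x ∈ uIcc (0:ℝ) s, HasDerivAt u (u' x) x := by
      intro x hx
      have h1 : HasDerivAt (fun τ : ℝ => t - τ) (-1) x := by
        simpa using (hasDerivAt_id' x).const_sub t
      have h2 := (Real.hasDerivAt_rpow_const (x := t - x) (p := -α)
        (Or.inl (ne_of_gt (hpos x hx)))).comp x h1
      refine h2.congr_deriv ?_
      simp only [hu']
      ring
    have hvd : ∀ x ∈ uIcc (0:ℝ) s, HasDerivAt v (v' x) x := by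
      intro x _
      have h1 : HasDerivAt (fun τ => w t - w τ) (0 - deriv w x) x :=
        (hasDerivAt_const x (w t)).sub (hwd x)
      have h2 := (h1.pow 2).const_mul (-((1:ℝ)/2))
      refine h2.congr_deriv ?_
      simp [hv']; ring
    have hu'int : IntervalIntegrable u' volume 0 s := by
      apply ContinuousOn.intervalIntegrable
      apply continuousOn_const.mul
      exact (continuousOn_const.sub continuousOn_id).rpow_const
        (fun x hx => Or.inl (ne_of_gt (hpos x hx)))
    have hv'int : IntervalIntegrable v' volume 0 s :=
      ((continuous_const.sub hw.continuous).mul hwc).intervalIntegrable 0 s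
    have ibp := intervalIntegral.integral_mul_deriv_eq_deriv_mul hud hvd hu'int hv'int
    have hgs : g s = ∫ x in (0:ℝ)..s, u x * v' x := by
      apply intervalIntegral.integral_congr
      intro x _
      simp [hf, hu, hv']; ring
    rw [hgs, ibp]
    have h1 : 0 ≤ u 0 * v 0 * (-1) + (u 0 * v 0) := by ring_nf; positivity
    have huv0 : u 0 * v 0 ≤ 0 := by
      have : (0:ℝ) < t - 0 := by linarith
      have h2 : 0 ≤ (t - 0) ^ (-α) := Real.rpow_nonneg (by linarith) _
      simp only [hu, hv]
      nlinarith [sq_nonneg (w t - w 0)]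
    have hint2 : 0 ≤ ∫ x in (0:ℝ)..s, u' x * (-(v x)) := by
      apply intervalIntegral.integral_nonneg hs0
      intro x hx
      have hx' : x ∈ uIcc (0:ℝ) s := by rw [uIcc_of_le hs0]; exact hx
      have := hpos x hx'
      simp only [hu', hv]
      have h3 : 0 ≤ (t - x) ^ (-α - 1) := Real.rpow_nonneg (by linarith) _
      have : α * (t - x) ^ (-α - 1) * -(-(1 / 2) * (w t - w x) ^ 2)
          = α * ((t - x) ^ (-α - 1)) * ((1/2) * (w t - w x) ^ 2) := by ring
      rw [this]
      positivity
    have hneg : (∫ x in (0:ℝ)..s, u' x * (-(v x))) = -∫ x in (0:ℝ)..s, u' x * v x := by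
      rw [← intervalIntegral.integral_neg]; congr 1; ext x; ring
    have husvs : -((1/2) * C^2 * (t - s) ^ (2 - α)) ≤ u s * v s := by
      simp only [hu, hv]
      have h4 : (w t - w s)^2 ≤ (C * (t - s))^2 := by
        have := lip s ⟨hs0, hst.le⟩
        nlinarith [abs_nonneg (w t - w s), sq_abs (w t - w s)]
      have h5 : (t - s) ^ (-α) * (t - s)^2 = (t - s) ^ (2 - α) := by
        rw [← Real.rpow_two, ← Real.rpow_add hts]; ring_nf
      have h6 : 0 ≤ (t - s) ^ (-α) := Real.rpow_nonneg hts.le _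
      nlinarith [h4, h6, h5]
    linarith [hint2, huv0, husvs, hneg ▸ hint2]
  -- take the limit s → t⁻
  haveI : (𝓝[Ico (0:ℝ) t] t).NeBot := right_nhdsWithin_Ico_neBot ht
  have hIcc : uIcc (0:ℝ) t = Icc 0 t := uIcc_of_le ht.le
  have hgc : ContinuousOn g (Icc (0:ℝ) t) := by
    have := intervalIntegral.continuousOn_primitive_interval' hfint
      (left_mem_uIcc (a := (0:ℝ)) (b := t))
    rwa [hIcc] at this
  have hgt : Tendsto g (𝓝[Ico (0:ℝ) t] t) (𝓝 (g t)) :=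
    ((hgc t (right_mem_Icc.2 ht.le)).tendsto).mono_left
      (nhdsWithin_mono t Ico_subset_Icc_self)
  have hb0 : Tendsto (fun s : ℝ => (t - s) ^ (2 - α)) (𝓝 t) (𝓝 0) := by
    have hc : ContinuousAt (fun x : ℝ => x ^ (2 - α)) 0 :=
      Real.continuousAt_rpow_const 0 _ (Or.inr (by linarith))
    have hsub : Tendsto (fun s : ℝ => t - s) (𝓝 t) (𝓝 0) := by
      have h := (continuous_sub_left t).tendsto t
      simpa using h
    have h3 := hc.tendsto.comp hsub
    rwa [Real.zero_rpow (by linarith : (2:ℝ) - α ≠ 0)] at h3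
  have hb1 : Tendsto (fun s : ℝ => -((1/2) * C^2 * (t - s) ^ (2 - α)))
      (𝓝[Ico (0:ℝ) t] t) (𝓝 0) := by
    have h := ((hb0.const_mul ((1/2) * C^2)).neg).mono_left
      (nhdsWithin_le_nhds (s := Ico (0:ℝ) t))
    simpa using h
  have := le_of_tendsto_of_tendsto hb1 hgt
    (by filter_upwards [self_mem_nhdsWithin] with s hs using hbound s hs)
  exact this

/-- Alikhanov's inequality: `w(t) ∂^α w(t) ≥ (1/2) ∂^α (w²)(t)`. -/
theorem stmt_12 (T α : ℝ) (hT : 0 < T) (hα : 0 < α) (hα1 : α < 1)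
    (w : ℝ → ℝ) (hw : ContDiff ℝ 1 w) (hw0 : w 0 = 0) :
    ∀ t ∈ Set.Ioc (0:ℝ) T,
      w t * caputoL α w t ≥ (1 / 2) * caputoL α (fun s => (w s) ^ 2) t := by
  intro t ht
  obtain ⟨ht0, htT⟩ := ht
  have hΓ : 0 ≤ (Real.Gamma (1 - α))⁻¹ :=
    (inv_pos.2 (Real.Gamma_pos_of_pos (by linarith))).le
  have hwc : Continuous (deriv w) := hw.continuous_deriv le_rfl
  have hXint := rpow_ii t α hα1
  have hA : IntervalIntegrable (fun τ => deriv w τ * (t - τ) ^ (-α)) volume 0 t :=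
    hXint.continuousOn_mul hwc.continuousOn
  have hB : IntervalIntegrable (fun τ => 2 * w τ * deriv w τ * (t - τ) ^ (-α)) volume 0 t :=
    hXint.continuousOn_mul
      (((continuousOn_const.mul hw.continuous.continuousOn).mul hwc.continuousOn))
  have hder2 : ∀ τ : ℝ, deriv (fun s => (w s) ^ 2) τ = 2 * w τ * deriv w τ := by
    intro τ
    have h := ((hw.differentiable one_ne_zero τ).hasDerivAt.pow 2).deriv
    rw [show (fun s => (w s) ^ 2) = w ^ 2 from rfl, h]; ring
  have hBeq : (∫ τ in (0:ℝ)..t, deriv (fun s => (w s) ^ 2) τ * (t - τ) ^ (-α))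
      = ∫ τ in (0:ℝ)..t, 2 * w τ * deriv w τ * (t - τ) ^ (-α) :=
    intervalIntegral.integral_congr fun τ _ => by rw [hder2]
  have hK := key t α ht0 hα hα1 w hw
  have hdiff : w t * (∫ τ in (0:ℝ)..t, deriv w τ * (t - τ) ^ (-α))
      - (1/2) * (∫ τ in (0:ℝ)..t, 2 * w τ * deriv w τ * (t - τ) ^ (-α))
      = ∫ τ in (0:ℝ)..t, (w t - w τ) * deriv w τ * (t - τ) ^ (-α) := by
    rw [← intervalIntegral.integral_const_mul, ← intervalIntegral.integral_const_mul,
      ← intervalIntegral.integral_sub (hA.const_mul _) (hB.const_mul _)]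
    apply intervalIntegral.integral_congr
    intro τ _
    ring
  unfold caputoL
  rw [hBeq, ge_iff_le, ← sub_nonneg]
  have heq : w t * ((Real.Gamma (1 - α))⁻¹ *
        ∫ τ in (0:ℝ)..t, deriv w τ * (t - τ) ^ (-α))
      - 1 / 2 * ((Real.Gamma (1 - α))⁻¹ *
        ∫ τ in (0:ℝ)..t, 2 * w τ * deriv w τ * (t - τ) ^ (-α))
      = (Real.Gamma (1 - α))⁻¹ *
        (w t * (∫ τ in (0:ℝ)..t, deriv w τ * (t - τ) ^ (-α))
          - (1/2) * ∫ τ in (0:ℝ)..t, 2 * w τ * deriv w τ * (t - τ) ^ (-α)) := by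
    ring
  rw [heq, hdiff]
  exact mul_nonneg hΓ hK
end
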